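/- At β = β_c = 2 + q·e, the symmetric solution of e^{-β x} = q x/(1-2x) is x = 1/(q·e + 2), and the Hessian matrix A = -[[1/x + 1/(1-2x), β + 1/(1-2x)],[β + 1/(1-2x), 1/x + 1/(1-2x)]] evaluated at this x has a zero eigenvalue. -/

import Mathlib

/-- At `β = β_c = 2 + q e`, the symmetric solution of `e^{-βx} = qx/(1-2x)` is
`x = 1/(q e + 2)`, and the Hessian matrix evaluated there has a zero eigenvalue. -/
theorem hessian_zero_eigenvalue_at_critical (q : ℝ) (hq : 0 < q) :
    let β := 2 + q * Real.exp 1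
    let x : ℝ := 1 / (q * Real.exp 1 + 2)
    Real.exp (-β * x) = q * x / (1 - 2 * x) ∧
    ∃ v : Fin 2 → ℝ, v ≠ 0 ∧
      Matrix.mulVec
        (-(Matrix.of ![![1 / x + 1 / (1 - 2 * x), β + 1 / (1 - 2 * x)],
                       ![β + 1 / (1 - 2 * x), 1 / x + 1 / (1 - 2 * x)]])) v = 0 := by
  intro β x
  have hE : (0:ℝ) < Real.exp 1 := Real.exp_pos 1
  have hD : (0:ℝ) < q * Real.exp 1 + 2 := by positivity
  have hD' : q * Real.exp 1 + 2 ≠ 0 := ne_of_gt hD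
  have hx : x = 1 / (q * Real.exp 1 + 2) := rfl
  have hβ : β = 2 + q * Real.exp 1 := rfl
  have h1 : (1 : ℝ) - 2 * x = q * Real.exp 1 / (q * Real.exp 1 + 2) := by
    rw [hx]; field_simp; ring
  constructor
  · have harg : -β * x = -1 := by
      rw [hβ, hx]; field_simp; ring
    rw [harg, h1, hx, Real.exp_neg]
    have hqE : q * Real.exp 1 ≠ 0 := by positivity
    field_simp
  · refine ⟨![1, -1], ?_, ?_⟩
    · intro h
      have := congrFun h 0
      simp at this
    · have hkey : β = 1 / x := by rw [hβ, hx]; field_simp; ring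
      funext i
      fin_cases i <;>
        simp [Matrix.mulVec, dotProduct, Fin.sum_univ_two, hkey] <;> ring
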